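/- Let T be a Frobenius monad on a dagger category C. If f : (A, a) → (B, b) is a morphism of FEM-algebras, then f† : B → A is a morphism of FEM-algebras (B, b) → (A, a); hence the dagger of C restricts to a dagger on the full subcategory of FEM-algebras in the Eilenberg–Moore category C^T, commuting with the forgetful functor to C. -/

import Mathlib

open CategoryTheory Category MonoidalCategory

universe v u

/-- A dagger structure on a category: a contravariant, identity-on-objects,
involutive operation on morphisms. -/
class DaggerStruct (C : Type u) [Category.{v} C] where
  dag : ∀ {X Y : C}, (X ⟶ Y) → (Y ⟶ X)
  dag_dag : ∀ {X Y : C} (f : X ⟶ Y), dag (dag f) = f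
  dag_id : ∀ X : C, dag (𝟙 X) = 𝟙 X
  dag_comp : ∀ {X Y Z : C} (f : X ⟶ Y) (g : Y ⟶ Z), dag (f ≫ g) = dag g ≫ dag f

notation:max f "†" => DaggerStruct.dag f

/-- A monoidal dagger category: the dagger cooperates with the monoidal structure. -/
class MonoidalDagger (C : Type u) [Category.{v} C] [MonoidalCategory C] extends
    DaggerStruct C where
  dag_tensor : ∀ {X₁ Y₁ X₂ Y₂ : C} (f : X₁ ⟶ Y₁) (g : X₂ ⟶ Y₂), (f ⊗ₘ g)† = f† ⊗ₘ g†
  assoc_unitary : ∀ X Y Z : C, ((α_ X Y Z).hom)† = (α_ X Y Z).inv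
  lunitor_unitary : ∀ X : C, ((λ_ X).hom)† = (λ_ X).inv
  runitor_unitary : ∀ X : C, ((ρ_ X).hom)† = (ρ_ X).inv

/-- A symmetric monoidal dagger category: additionally the symmetries are unitary. -/
class SymmetricDagger (C : Type u) [Category.{v} C] [MonoidalCategory C]
    [SymmetricCategory C] extends MonoidalDagger C where
  braiding_unitary : ∀ X Y : C, ((β_ X Y).hom)† = (β_ X Y).inv

/-- A monoid object, given by explicit data. -/
structure IsMonoidObj {C : Type u} [Category.{v} C] [MonoidalCategory C] (A : C)
    (m : A ⊗ A ⟶ A) (u : 𝟙_ C ⟶ A) : Prop where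
  mul_assoc : (m ⊗ₘ 𝟙 A) ≫ m = (α_ A A A).hom ≫ (𝟙 A ⊗ₘ m) ≫ m
  one_mul : (u ⊗ₘ 𝟙 A) ≫ m = (λ_ A).hom
  mul_one : (𝟙 A ⊗ₘ u) ≫ m = (ρ_ A).hom

/-- A Frobenius monoid in a monoidal dagger category. -/
structure IsFrobeniusMonoid {C : Type u} [Category.{v} C] [MonoidalCategory C]
    [MonoidalDagger C] (A : C) (m : A ⊗ A ⟶ A) (u : 𝟙_ C ⟶ A) extends
    IsMonoidObj A m u : Prop where
  frobenius : (m† ⊗ₘ 𝟙 A) ≫ (α_ A A A).hom ≫ (𝟙 A ⊗ₘ m) =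
    (𝟙 A ⊗ₘ m†) ≫ (α_ A A A).inv ≫ (m ⊗ₘ 𝟙 A)

/-- A Frobenius monad on a dagger category. -/
structure IsFrobeniusMonad {C : Type u} [Category.{v} C] [DaggerStruct C]
    (T : Monad C) : Prop where
  map_dag : ∀ {X Y : C} (f : X ⟶ Y), T.map (f†) = (T.map f)†
  frobenius : ∀ A : C,
    ((T.μ.app (T.obj A))†) ≫ T.map (T.μ.app A) =
      T.map ((T.μ.app A)†) ≫ T.μ.app (T.obj A)

/-- A Frobenius–Eilenberg–Moore (FEM-)algebra: an Eilenberg–Moore algebra `(A, a)`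
satisfying `μ_A ∘ T(a)† = T(a) ∘ μ_A†`. -/
def IsFEM {C : Type u} [Category.{v} C] [DaggerStruct C] {T : Monad C}
    (X : T.Algebra) : Prop :=
  ((T.map X.a)†) ≫ T.μ.app X.A = ((T.μ.app X.A)†) ≫ T.map X.a

/-- STATEMENT 14: for a Frobenius monad `T` on a dagger category `C`, the dagger of a
morphism of FEM-algebras is again a morphism of FEM-algebras; hence the dagger of `C`
induces a dagger on the full subcategory of FEM-algebras of the Eilenberg--Moore
category, commuting with the forgetful functor to `C`. -/
theorem fem_algebras_dagger {C : Type u} [Category.{v} C] [DaggerStruct C]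
    (T : Monad C) (hT : IsFrobeniusMonad T) :
    (∀ (X Y : T.Algebra), IsFEM X → IsFEM Y → ∀ f : X ⟶ Y,
      T.map ((f.f)†) ≫ X.a = Y.a ≫ ((f.f)†)) ∧
    ∃ ds : DaggerStruct (ObjectProperty.FullSubcategory fun Z : T.Algebra => IsFEM Z),
      ∀ (X Y : ObjectProperty.FullSubcategory fun Z : T.Algebra => IsFEM Z) (f : X ⟶ Y),
        (ds.dag f).hom.f = ((f.hom.f)†) := by

  -- Lemma L: for an FEM algebra, `a† = η ≫ μ† ≫ T a`.
  have L : ∀ (X : T.Algebra), IsFEM X →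
      (X.a)† = T.η.app X.A ≫ ((T.μ.app X.A)†) ≫ T.map X.a := by
    intro X hX
    unfold IsFEM at hX
    rw [← hX, ← hT.map_dag, ← assoc, ← T.η.naturality ((X.a)†)]
    simp
  -- Daggered naturality of μ.
  have munat : ∀ {A B : C} (f : A ⟶ B),
      ((T.μ.app A)†) ≫ T.map (T.map f) = T.map f ≫ ((T.μ.app B)†) := by
    intro A B f
    have h := T.μ.naturality ((f)†)
    have h2 := congrArg DaggerStruct.dag h
    simp only [DaggerStruct.dag_comp] at h2
    simpa [hT.map_dag, DaggerStruct.dag_dag] using h2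
  have main : ∀ (X Y : T.Algebra), IsFEM X → IsFEM Y → ∀ f : X ⟶ Y,
      T.map ((f.f)†) ≫ X.a = Y.a ≫ ((f.f)†) := by
    intro X Y hX hY f
    have e : ((X.a)†) ≫ T.map f.f = f.f ≫ ((Y.a)†) := by
      have hf : X.a ≫ f.f = T.map f.f ≫ Y.a := f.h.symm
      calc ((X.a)†) ≫ T.map f.f
          = T.η.app X.A ≫ ((T.μ.app X.A)†) ≫ T.map X.a ≫ T.map f.f := by
            rw [L X hX]; simp
        _ = T.η.app X.A ≫ ((T.μ.app X.A)†) ≫ T.map (T.map f.f) ≫ T.map Y.a := by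
            rw [← T.map_comp, hf, T.map_comp]
        _ = T.η.app X.A ≫ T.map f.f ≫ ((T.μ.app Y.A)†) ≫ T.map Y.a := by
            rw [← assoc ((T.μ.app X.A)†), munat f.f]; simp
        _ = f.f ≫ T.η.app Y.A ≫ ((T.μ.app Y.A)†) ≫ T.map Y.a := by
            rw [← assoc, ← T.η.naturality f.f]; simp
        _ = f.f ≫ ((Y.a)†) := by rw [← L Y hY]
    have e2 := congrArg DaggerStruct.dag e
    simp only [DaggerStruct.dag_comp, DaggerStruct.dag_dag] at e2
    rw [hT.map_dag, e2]
  refine ⟨main, ⟨{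
    dag := fun {X Y} f => ⟨⟨(f.hom.f)†, main X.obj Y.obj X.property Y.property f.hom⟩⟩
    dag_dag := fun f => by apply ObjectProperty.hom_ext; apply Monad.Algebra.Hom.ext; simp [DaggerStruct.dag_dag]
    dag_id := fun X => by apply ObjectProperty.hom_ext; apply Monad.Algebra.Hom.ext; simp [show ((𝟙 X : X ⟶ X).hom.f) = 𝟙 X.obj.A from Monad.Algebra.id_f X.obj, DaggerStruct.dag_id]
    dag_comp := fun f g => by
      apply ObjectProperty.hom_ext
      apply Monad.Algebra.Hom.ext
      show ((f ≫ g : _ ⟶ _).hom.f)† = (g.hom.f)† ≫ (f.hom.f)†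
      rw [show ((f ≫ g : _ ⟶ _).hom.f) = f.hom.f ≫ g.hom.f from Monad.Algebra.comp_f f.hom g.hom, DaggerStruct.dag_comp] }, fun X Y f => rfl⟩⟩
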